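/- Let H ∈ (1/2,1), T > 0, and a, b ∈ ℝ with a ≠ 0. Let K*_H be the bounded operator on L²([0,T]) given by (K*_H f)(s) = c(H)·s^{−(H−1/2)}·∫_s^T f(u)·u^{H−1/2}·(u−s)^{H−3/2} du. Then the Neumann series (1/a)·∑_{k=0}^∞ (−b/a)^k (K*_H)^k converges absolutely in operator norm, and its sum is a two-sided inverse of the bounded operator a·I + b·K*_H on L²([0,T]); in particular a·I + b·K*_H is a bounded bijection of L²([0,T]). -/

import Mathlib

open MeasureTheory Real Set Filter
open Topology

/-- The normalizing constant `c(H)` of the Molchan–Golosov kernel. -/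
noncomputable def cH (H : ℝ) : ℝ :=
  Real.sqrt (2 * H * Real.Gamma (3/2 - H) / (Real.Gamma (H + 1/2) * Real.Gamma (2 - 2*H)))
    * (H - 1/2)

/-- The Molchan–Golosov kernel `K_H(t,s)`; it vanishes for `s ≥ t`. -/
noncomputable def KH (H t s : ℝ) : ℝ :=
  if s < t then
    cH H * s ^ (-(H - 1/2)) * ∫ u in s..t, u ^ (H - 1/2) * (u - s) ^ (H - 3/2)
  else 0

/-- The covariance function of fractional Brownian motion. -/
noncomputable def RH (H t s : ℝ) : ℝ :=
  (t ^ (2*H) + s ^ (2*H) - |t - s| ^ (2*H)) / 2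

/-- The Neumann series `(1/a)∑_k (−b/a)^k (K*_H)^k` converges absolutely in operator norm
and yields a two-sided inverse of `a·I + b·K*_H` on `L²([0,T])`; in particular
`a·I + b·K*_H` is a bounded bijection of `L²([0,T])`.  Here `K*_H` is (any) bounded
operator on `L²([0,T])` realizing the formula
`(K*_H f)(s) = c(H)·s^{−(H−1/2)}·∫_s^T f(u)u^{H−1/2}(u−s)^{H−3/2} du`. -/
noncomputable def Bconst (α β : ℝ) : ENNReal :=
  ∫⁻ x in Ioc (0:ℝ) 1, ENNReal.ofReal (x ^ (α-1) * (1 - x) ^ (β-1))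

lemma beta_subst {α β s v : ℝ} (hα : 0 < α) (hβ : 0 < β) (hsv : s < v) :
    ∫⁻ u in Ioc s v, ENNReal.ofReal ((u - s) ^ (α-1) * (v - u) ^ (β-1)) =
      ENNReal.ofReal ((v - s) ^ (α + β - 1)) * Bconst α β := by
  unfold Bconst
  have hvs : (0:ℝ) < v - s := sub_pos.2 hsv
  set e : ℝ → ℝ := fun x => s + (v - s) * x with he
  have hem : Measurable e := by fun_prop
  have hmap : Measure.map e volume = ENNReal.ofReal (v - s)⁻¹ • volume := by
    have h1 : Measure.map (fun x : ℝ => (v - s) * x) volume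
        = ENNReal.ofReal |(v - s)⁻¹| • volume := Real.map_volume_mul_left hvs.ne'
    have h2 := (measurePreserving_add_left volume s).map_eq
    have : e = (fun x : ℝ => s + x) ∘ (fun x : ℝ => (v - s) * x) := rfl
    rw [this, ← Measure.map_map (by fun_prop) (by fun_prop), h1,
      Measure.map_smul, h2, abs_of_pos (by positivity)]
  have hvol : (volume : Measure ℝ) = ENNReal.ofReal (v - s) • Measure.map e volume := by
    rw [hmap, smul_smul, ← ENNReal.ofReal_mul hvs.le, mul_inv_cancel₀ hvs.ne', ENNReal.ofReal_one,
      one_smul]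
  set F : ℝ → ENNReal := fun u => ENNReal.ofReal ((u - s) ^ (α-1) * (v - u) ^ (β-1)) with hF
  have hFm : Measurable F := by fun_prop
  have hind : Measurable ((Ioc s v).indicator F) := hFm.indicator measurableSet_Ioc
  calc ∫⁻ u in Ioc s v, F u
      = ∫⁻ u, (Ioc s v).indicator F u ∂volume := (lintegral_indicator measurableSet_Ioc F).symm
    _ = ENNReal.ofReal (v - s) * ∫⁻ u, (Ioc s v).indicator F u ∂(Measure.map e volume) := by
        conv_lhs => rw [hvol]; rw [lintegral_smul_measure, smul_eq_mul]
    _ = ENNReal.ofReal (v - s) * ∫⁻ x, (Ioc s v).indicator F (e x) ∂volume := by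
        rw [lintegral_map hind hem]
    _ = ENNReal.ofReal (v - s) * ∫⁻ x, (Ioc (0:ℝ) 1).indicator (fun x =>
          ENNReal.ofReal ((v-s)^(α-1) * (v-s)^(β-1)) * ENNReal.ofReal (x ^ (α-1) * (1 - x) ^ (β-1))) x ∂volume := by
        congr 1
        apply lintegral_congr
        intro x
        by_cases hx : x ∈ Ioc (0:ℝ) 1
        · have hx1 : e x ∈ Ioc s v := by
            constructor
            · simp only [he]; nlinarith [hx.1]
            · simp only [he]; nlinarith [hx.2]
          rw [Set.indicator_of_mem hx1, Set.indicator_of_mem hx, hF]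
          have h1 : e x - s = (v - s) * x := by simp only [he]; ring
          have h2 : v - e x = (v - s) * (1 - x) := by simp only [he]; ring
          show ENNReal.ofReal ((e x - s) ^ (α-1) * (v - e x) ^ (β-1)) = _
          rw [h1, h2, Real.mul_rpow hvs.le hx.1.le, Real.mul_rpow hvs.le (by linarith [hx.2] : (0:ℝ) ≤ 1 - x),
            ← ENNReal.ofReal_mul (by positivity)]
          congr 1
          ring
        · have hx1 : e x ∉ Ioc s v := by
            simp only [mem_Ioc, not_and_or, not_le, not_lt] at hx ⊢
            rcases hx with h | h
            · left; simp only [he]; nlinarith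
            · right; simp only [he]; nlinarith
          rw [Set.indicator_of_notMem hx1, Set.indicator_of_notMem hx]
    _ = ENNReal.ofReal (v - s) * (ENNReal.ofReal ((v-s)^(α-1) * (v-s)^(β-1)) *
          ∫⁻ x in Ioc (0:ℝ) 1, ENNReal.ofReal (x ^ (α-1) * (1 - x) ^ (β-1))) := by
        rw [lintegral_indicator measurableSet_Ioc, lintegral_const_mul' _ _ ENNReal.ofReal_ne_top]
    _ = ENNReal.ofReal ((v - s) ^ (α + β - 1)) *
          ∫⁻ x in Ioc (0:ℝ) 1, ENNReal.ofReal (x ^ (α-1) * (1 - x) ^ (β-1)) := by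
        rw [← mul_assoc, ← ENNReal.ofReal_mul hvs.le]
        congr 2
        have h3 : (v-s) * ((v-s)^(α-1)*(v-s)^(β-1)) = (v-s)^(1:ℝ) * (v-s)^(α-1) * (v-s)^(β-1) := by
          rw [Real.rpow_one]; ring
        rw [h3, ← Real.rpow_add hvs, ← Real.rpow_add hvs]
        congr 1
        ring

lemma Iα_lt_top {α : ℝ} (hα : 0 < α) :
    (∫⁻ x in Ioc (0:ℝ) 1, ENNReal.ofReal (x ^ (α-1))) < ⊤ := by
  have h : IntegrableOn (fun x : ℝ => x ^ (α-1)) (Ioc (0:ℝ) 1) volume := by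
    rw [← intervalIntegrable_iff_integrableOn_Ioc_of_le zero_le_one]
    exact intervalIntegral.intervalIntegrable_rpow' (by linarith)
  calc (∫⁻ x in Ioc (0:ℝ) 1, ENNReal.ofReal (x ^ (α-1)))
      ≤ ∫⁻ x in Ioc (0:ℝ) 1, (‖x ^ (α-1)‖₊ : ENNReal) :=
        lintegral_mono fun x => Real.ofReal_le_enorm _
    _ < ⊤ := h.2

noncomputable def Jfun (T α β : ℝ) (f : ℝ → ℝ) (s : ℝ) : ENNReal :=
  ∫⁻ u in Ioc s T, (‖f u‖₊ : ENNReal) * ENNReal.ofReal (u ^ α * (u - s) ^ (β - 1)) ∂volume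

lemma J_swap {T α β s : ℝ} (hα : 0 < α) (hβ : 0 < β) (hs : 0 < s) {f : ℝ → ℝ}
    (hf : Measurable f) :
    ∫⁻ u in Ioc s T, ENNReal.ofReal ((u - s) ^ (α - 1)) * Jfun T α β f u ∂volume
      = Bconst α β * Jfun T α (α + β) f s := by
  set S : Set (ℝ × ℝ) := (Ioc s T ×ˢ Ioc s T) ∩ {p : ℝ × ℝ | p.1 < p.2} with hSdef
  have hS : MeasurableSet S :=
    (measurableSet_Ioc.prod measurableSet_Ioc).inter (measurableSet_lt measurable_fst measurable_snd)
  set Φ : ℝ × ℝ → ENNReal := fun p =>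
    ENNReal.ofReal ((p.1 - s) ^ (α-1)) *
      ((‖f p.2‖₊ : ENNReal) * ENNReal.ofReal (p.2 ^ α * (p.2 - p.1) ^ (β-1))) with hΦdef
  have hΦm : Measurable Φ := by fun_prop
  set Ψ : ℝ → ℝ → ENNReal := fun u v => S.indicator Φ (u, v) with hΨdef
  have hΨm : Measurable (Function.uncurry Ψ) := by
    have : Function.uncurry Ψ = S.indicator Φ := rfl
    rw [this]; exact hΦm.indicator hS
  have step1 : ∀ u, (Ioc s T).indicator
      (fun u => ENNReal.ofReal ((u - s) ^ (α - 1)) * Jfun T α β f u) u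
        = ∫⁻ v, Ψ u v ∂volume := by
    intro u
    by_cases hu : u ∈ Ioc s T
    · rw [Set.indicator_of_mem hu, Jfun,
        ← lintegral_const_mul' _ _ ENNReal.ofReal_ne_top,
        ← lintegral_indicator measurableSet_Ioc]
      apply lintegral_congr
      intro v
      simp only [hΨdef]
      by_cases hv : v ∈ Ioc u T
      · have hmem : (u, v) ∈ S := by
          refine ⟨⟨hu, ?_, hv.2⟩, hv.1⟩
          exact lt_trans hu.1 hv.1
        rw [Set.indicator_of_mem hv, Set.indicator_of_mem hmem]
      · have hmem : (u, v) ∉ S := by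
          intro hmem
          exact hv ⟨hmem.2, hmem.1.2.2⟩
        rw [Set.indicator_of_notMem hv, Set.indicator_of_notMem hmem]
    · rw [Set.indicator_of_notMem hu]
      have h0 : ∀ v, Ψ u v = 0 := by
        intro v
        simp only [hΨdef]
        apply Set.indicator_of_notMem
        intro hmem
        exact hu hmem.1.1
      simp [h0]
  have step2 : ∀ v, (∫⁻ u, Ψ u v ∂volume) = (Ioc s T).indicator
      (fun v => (‖f v‖₊ : ENNReal) * ENNReal.ofReal (v ^ α * (v - s) ^ (α + β - 1))
        * Bconst α β) v := by
    intro v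
    by_cases hv : v ∈ Ioc s T
    · have hsv : s < v := hv.1
      have hv0 : (0:ℝ) < v := hs.trans hsv
      rw [Set.indicator_of_mem hv]
      have e1 : ∀ u, Ψ u v = (Ioo s v).indicator (fun u =>
          ((‖f v‖₊ : ENNReal) * ENNReal.ofReal (v ^ α)) *
            ENNReal.ofReal ((u - s) ^ (α-1) * (v - u) ^ (β-1))) u := by
        intro u
        simp only [hΨdef]
        by_cases hu : u ∈ Ioo s v
        · have hmem : (u, v) ∈ S := by
            exact ⟨⟨⟨hu.1, le_trans hu.2.le hv.2⟩, hv⟩, hu.2⟩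
          rw [Set.indicator_of_mem hmem, Set.indicator_of_mem hu, hΦdef]
          show ENNReal.ofReal ((u - s) ^ (α-1)) *
            ((‖f v‖₊ : ENNReal) * ENNReal.ofReal (v ^ α * (v - u) ^ (β-1))) = _
          rw [ENNReal.ofReal_mul (Real.rpow_nonneg hv0.le _),
            ENNReal.ofReal_mul (Real.rpow_nonneg (by linarith [hu.1] : (0:ℝ) ≤ u - s) _)]
          ring
        · have hmem : (u, v) ∉ S := by
            intro hmem
            exact hu ⟨hmem.1.1.1, hmem.2⟩
          rw [Set.indicator_of_notMem hmem, Set.indicator_of_notMem hu]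
      calc (∫⁻ u, Ψ u v ∂volume) = ∫⁻ u in Ioo s v,
            ((‖f v‖₊ : ENNReal) * ENNReal.ofReal (v ^ α)) *
              ENNReal.ofReal ((u - s) ^ (α-1) * (v - u) ^ (β-1)) ∂volume := by
            rw [← lintegral_indicator measurableSet_Ioo]
            exact lintegral_congr e1
        _ = ∫⁻ u in Ioc s v,
            ((‖f v‖₊ : ENNReal) * ENNReal.ofReal (v ^ α)) *
              ENNReal.ofReal ((u - s) ^ (α-1) * (v - u) ^ (β-1)) ∂volume :=
            setLIntegral_congr Ioo_ae_eq_Ioc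
        _ = ((‖f v‖₊ : ENNReal) * ENNReal.ofReal (v ^ α)) *
              (ENNReal.ofReal ((v - s) ^ (α + β - 1)) * Bconst α β) := by
            rw [lintegral_const_mul' _ _ (ENNReal.mul_ne_top ENNReal.coe_ne_top ENNReal.ofReal_ne_top),
              beta_subst hα hβ hsv]
        _ = (‖f v‖₊ : ENNReal) * ENNReal.ofReal (v ^ α * (v - s) ^ (α + β - 1)) * Bconst α β := by
            rw [ENNReal.ofReal_mul (Real.rpow_nonneg hv0.le _)]
            ring
    · rw [Set.indicator_of_notMem hv]
      have h0 : ∀ u, Ψ u v = 0 := by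
        intro u
        simp only [hΨdef]
        apply Set.indicator_of_notMem
        intro hmem
        exact hv hmem.1.2
      simp [h0]
  calc ∫⁻ u in Ioc s T, ENNReal.ofReal ((u - s) ^ (α - 1)) * Jfun T α β f u ∂volume
      = ∫⁻ u, (Ioc s T).indicator
          (fun u => ENNReal.ofReal ((u - s) ^ (α - 1)) * Jfun T α β f u) u ∂volume :=
        (lintegral_indicator measurableSet_Ioc _).symm
    _ = ∫⁻ u, ∫⁻ v, Ψ u v ∂volume ∂volume := lintegral_congr step1
    _ = ∫⁻ v, ∫⁻ u, Ψ u v ∂volume ∂volume := lintegral_lintegral_swap hΨm.aemeasurable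
    _ = ∫⁻ v, (Ioc s T).indicator
          (fun v => (‖f v‖₊ : ENNReal) * ENNReal.ofReal (v ^ α * (v - s) ^ (α + β - 1))
            * Bconst α β) v ∂volume := lintegral_congr step2
    _ = ∫⁻ v in Ioc s T, (‖f v‖₊ : ENNReal) * ENNReal.ofReal (v ^ α * (v - s) ^ (α + β - 1))
          * Bconst α β ∂volume := lintegral_indicator measurableSet_Ioc _
    _ = Bconst α β * Jfun T α (α + β) f s := by
        rw [Jfun]
        have : α + β - 1 = (α + β) - 1 := by ring
        rw [this, lintegral_mul_const _ (by fun_prop), mul_comm]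

lemma J_le_step {T α β : ℝ} (hα : 0 < α) (hβ : 0 < β) {C : ENNReal} (hC : C ≠ ⊤)
    {f g : ℝ → ℝ} (hf : Measurable f)
    (hg : ∀ᵐ u ∂(volume.restrict (Ioc (0:ℝ) T)),
      (‖g u‖₊ : ENNReal) ≤ C * ENNReal.ofReal (u ^ (-α)) * Jfun T α β f u)
    {s : ℝ} (hs : 0 < s) :
    Jfun T α α g s ≤ C * Bconst α β * Jfun T α (α + β) f s := by
  have hsub : Ioc s T ⊆ Ioc (0:ℝ) T := Ioc_subset_Ioc_left hs.le
  have hg' : ∀ᵐ u ∂(volume.restrict (Ioc s T)),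
      (‖g u‖₊ : ENNReal) ≤ C * ENNReal.ofReal (u ^ (-α)) * Jfun T α β f u :=
    ae_restrict_of_ae_restrict_of_subset hsub hg
  calc Jfun T α α g s
      = ∫⁻ u in Ioc s T, (‖g u‖₊ : ENNReal) * ENNReal.ofReal (u ^ α * (u - s) ^ (α - 1)) ∂volume := rfl
    _ ≤ ∫⁻ u in Ioc s T, (C * ENNReal.ofReal (u ^ (-α)) * Jfun T α β f u) *
          ENNReal.ofReal (u ^ α * (u - s) ^ (α - 1)) ∂volume :=
        lintegral_mono_ae (hg'.mono fun u hu => mul_le_mul_left hu _)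
    _ = ∫⁻ u in Ioc s T, C * (ENNReal.ofReal ((u - s) ^ (α - 1)) * Jfun T α β f u) ∂volume := by
        apply setLIntegral_congr_fun measurableSet_Ioc
        intro u hu
        have hu0 : (0:ℝ) < u := hs.trans hu.1
        beta_reduce
        rw [ENNReal.ofReal_mul (Real.rpow_nonneg hu0.le _)]
        have h1 : ENNReal.ofReal (u ^ (-α)) * ENNReal.ofReal (u ^ α) = 1 := by
          rw [← ENNReal.ofReal_mul (Real.rpow_nonneg hu0.le _), ← Real.rpow_add hu0]
          norm_num
        calc C * ENNReal.ofReal (u ^ (-α)) * Jfun T α β f u *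
              (ENNReal.ofReal (u ^ α) * ENNReal.ofReal ((u - s) ^ (α - 1)))
            = C * (ENNReal.ofReal (u ^ (-α)) * ENNReal.ofReal (u ^ α)) *
                (ENNReal.ofReal ((u - s) ^ (α - 1)) * Jfun T α β f u) := by ring
          _ = C * (ENNReal.ofReal ((u - s) ^ (α - 1)) * Jfun T α β f u) := by rw [h1]; ring
    _ = C * ∫⁻ u in Ioc s T, ENNReal.ofReal ((u - s) ^ (α - 1)) * Jfun T α β f u ∂volume :=
        lintegral_const_mul' _ _ hC
    _ = C * (Bconst α β * Jfun T α (α + β) f s) := by rw [J_swap hα hβ hs hf]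
    _ = C * Bconst α β * Jfun T α (α + β) f s := (mul_assoc _ _ _).symm

lemma base_bound {T α cc : ℝ} (hc : 0 ≤ cc) {f g : ℝ → ℝ} (hf : Measurable f)
    (hg : ∀ᵐ s ∂(volume.restrict (Ioc (0:ℝ) T)),
      g s = cc * s ^ (-α) * ∫ u in s..T, f u * u ^ α * (u - s) ^ (α - 1)) :
    ∀ᵐ s ∂(volume.restrict (Ioc (0:ℝ) T)),
      (‖g s‖₊ : ENNReal) ≤ ENNReal.ofReal cc * ENNReal.ofReal (s ^ (-α)) * Jfun T α α f s := by
  filter_upwards [hg, ae_restrict_mem measurableSet_Ioc] with s hgs hs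
  have hs0 : (0:ℝ) < s := hs.1
  rw [hgs]
  calc (‖cc * s ^ (-α) * ∫ u in s..T, f u * u ^ α * (u - s) ^ (α - 1)‖₊ : ENNReal)
      = ENNReal.ofReal cc * ENNReal.ofReal (s ^ (-α)) *
          (‖∫ u in s..T, f u * u ^ α * (u - s) ^ (α - 1)‖₊ : ENNReal) := by
        rw [nnnorm_mul, nnnorm_mul, ENNReal.coe_mul, ENNReal.coe_mul, ← enorm_eq_nnnorm cc,
          Real.enorm_eq_ofReal hc, ← enorm_eq_nnnorm (s ^ (-α)), Real.enorm_eq_ofReal (Real.rpow_nonneg hs0.le _)]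
    _ ≤ ENNReal.ofReal cc * ENNReal.ofReal (s ^ (-α)) * Jfun T α α f s := by
        apply mul_le_mul_right
        rw [intervalIntegral.integral_of_le hs.2]
        refine le_trans (enorm_integral_le_lintegral_enorm _) ?_
        apply setLIntegral_mono (by fun_prop)
        intro u hu
        rw [enorm_eq_nnnorm]
        have hu0 : (0:ℝ) < u := hs0.trans hu.1
        rw [nnnorm_mul, nnnorm_mul, ENNReal.coe_mul, ENNReal.coe_mul,
          ← enorm_eq_nnnorm (u ^ α), Real.enorm_eq_ofReal (Real.rpow_nonneg hu0.le _),
          ← enorm_eq_nnnorm ((u - s) ^ (α - 1)),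
          Real.enorm_eq_ofReal (Real.rpow_nonneg (by linarith [hu.1] : (0:ℝ) ≤ u - s) _),
          mul_assoc, ← ENNReal.ofReal_mul (Real.rpow_nonneg hu0.le _)]

lemma rpow_bnd {e t : ℝ} (h1 : 1/2 ≤ t) (h2 : t ≤ 1) : t ^ e ≤ (1/2:ℝ) ^ e + 1 := by
  rcases le_total e 0 with h | h
  · have h3 := Real.rpow_le_rpow_of_nonpos (by norm_num : (0:ℝ) < 1/2) h1 h
    linarith
  · have h3 := Real.rpow_le_one (by linarith : (0:ℝ) ≤ t) h2 h
    have h4 : (0:ℝ) ≤ (1/2:ℝ) ^ e := Real.rpow_nonneg (by norm_num) e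
    linarith

lemma Bconst_ne_top' {α β : ℝ} (hα : 0 < α) (hβ : 0 < β) : Bconst α β ≠ ⊤ := by
  have hm1 : (0:ℝ) ≤ (1/2:ℝ) ^ (β-1) + 1 := by positivity
  have hm2 : (0:ℝ) ≤ (1/2:ℝ) ^ (α-1) + 1 := by positivity
  have part1 : (∫⁻ x in Ioc (0:ℝ) (1/2), ENNReal.ofReal (x ^ (α-1) * (1 - x) ^ (β-1))) ≠ ⊤ := by
    have hle1 : (∫⁻ x in Ioc (0:ℝ) (1/2), ENNReal.ofReal (x ^ (α-1) * (1 - x) ^ (β-1)))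
        ≤ ENNReal.ofReal ((1/2:ℝ) ^ (β-1) + 1) * ∫⁻ x in Ioc (0:ℝ) 1, ENNReal.ofReal (x ^ (α-1)) := by
      calc (∫⁻ x in Ioc (0:ℝ) (1/2), ENNReal.ofReal (x ^ (α-1) * (1 - x) ^ (β-1)))
          ≤ ∫⁻ x in Ioc (0:ℝ) (1/2),
              ENNReal.ofReal ((1/2:ℝ) ^ (β-1) + 1) * ENNReal.ofReal (x ^ (α-1)) := by
            apply setLIntegral_mono (by fun_prop)
            intro x hx
            rw [← ENNReal.ofReal_mul hm1]
            apply ENNReal.ofReal_le_ofReal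
            rw [mul_comm ((1/2:ℝ) ^ (β-1) + 1)]
            apply mul_le_mul_of_nonneg_left _ (Real.rpow_nonneg hx.1.le _)
            exact rpow_bnd (by linarith [hx.2]) (by linarith [hx.1])
        _ = ENNReal.ofReal ((1/2:ℝ) ^ (β-1) + 1) * ∫⁻ x in Ioc (0:ℝ) (1/2), ENNReal.ofReal (x ^ (α-1)) :=
            lintegral_const_mul' _ _ ENNReal.ofReal_ne_top
        _ ≤ ENNReal.ofReal ((1/2:ℝ) ^ (β-1) + 1) * ∫⁻ x in Ioc (0:ℝ) 1, ENNReal.ofReal (x ^ (α-1)) := by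
            apply mul_le_mul_right
            exact lintegral_mono_set (Ioc_subset_Ioc_right (by norm_num))
    exact (hle1.trans_lt (ENNReal.mul_lt_top ENNReal.ofReal_lt_top (Iα_lt_top hα))).ne
  have part2 : (∫⁻ x in Ioc (1/2:ℝ) 1, ENNReal.ofReal (x ^ (α-1) * (1 - x) ^ (β-1))) ≠ ⊤ := by
    have hint : IntegrableOn (fun x : ℝ => (1 - x) ^ (β-1)) (Ioc (1/2:ℝ) 1) volume := by
      have h1 : IntervalIntegrable (fun x : ℝ => x ^ (β-1)) volume 0 (1/2) :=
        intervalIntegral.intervalIntegrable_rpow' (by linarith)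
      have h2 := h1.comp_sub_left 1
      rw [show (1:ℝ) - 1/2 = 1/2 by norm_num, show (1:ℝ) - 0 = 1 by norm_num] at h2
      exact (intervalIntegrable_iff_integrableOn_Ioc_of_le (by norm_num)).mp h2.symm
    have hle2 : (∫⁻ x in Ioc (1/2:ℝ) 1, ENNReal.ofReal (x ^ (α-1) * (1 - x) ^ (β-1)))
        ≤ ENNReal.ofReal ((1/2:ℝ) ^ (α-1) + 1) *
            ∫⁻ x in Ioc (1/2:ℝ) 1, (‖(1 - x) ^ (β-1)‖₊ : ENNReal) := by
      calc (∫⁻ x in Ioc (1/2:ℝ) 1, ENNReal.ofReal (x ^ (α-1) * (1 - x) ^ (β-1)))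
          ≤ ∫⁻ x in Ioc (1/2:ℝ) 1,
              ENNReal.ofReal ((1/2:ℝ) ^ (α-1) + 1) * (‖(1 - x) ^ (β-1)‖₊ : ENNReal) := by
            apply setLIntegral_mono (by fun_prop)
            intro x hx
            calc ENNReal.ofReal (x ^ (α-1) * (1 - x) ^ (β-1))
                ≤ ENNReal.ofReal (((1/2:ℝ) ^ (α-1) + 1) * (1 - x) ^ (β-1)) :=
                  ENNReal.ofReal_le_ofReal (mul_le_mul_of_nonneg_right (rpow_bnd hx.1.le hx.2)
                    (Real.rpow_nonneg (by linarith [hx.2]) _))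
              _ = ENNReal.ofReal ((1/2:ℝ) ^ (α-1) + 1) * ENNReal.ofReal ((1-x)^(β-1)) :=
                  ENNReal.ofReal_mul hm2
              _ ≤ ENNReal.ofReal ((1/2:ℝ) ^ (α-1) + 1) * (‖(1 - x) ^ (β-1)‖₊ : ENNReal) :=
                  mul_le_mul_right (Real.ofReal_le_enorm _) _
        _ = ENNReal.ofReal ((1/2:ℝ) ^ (α-1) + 1) *
              ∫⁻ x in Ioc (1/2:ℝ) 1, (‖(1 - x) ^ (β-1)‖₊ : ENNReal) :=
            lintegral_const_mul' _ _ ENNReal.ofReal_ne_top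
    exact (hle2.trans_lt (ENNReal.mul_lt_top ENNReal.ofReal_lt_top hint.2)).ne
  have hsplit : Ioc (0:ℝ) 1 = Ioc (0:ℝ) (1/2) ∪ Ioc (1/2:ℝ) 1 :=
    (Ioc_union_Ioc_eq_Ioc (by norm_num) (by norm_num)).symm
  have hle := lintegral_union_le (μ := volume)
    (fun x : ℝ => ENNReal.ofReal (x ^ (α-1) * (1 - x) ^ (β-1))) (Ioc (0:ℝ) (1/2)) (Ioc (1/2:ℝ) 1)
  rw [Bconst, hsplit]
  exact (hle.trans_lt (ENNReal.add_lt_top.mpr ⟨part1.lt_top, part2.lt_top⟩)).ne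

lemma J_le_const {T α β : ℝ} (hα : 0 < α) (hβ1 : 1 ≤ β) {f : ℝ → ℝ} {s : ℝ}
    (hs : s ∈ Ioc (0:ℝ) T) :
    Jfun T α β f s ≤ ENNReal.ofReal (T ^ α * T ^ (β - 1)) *
      ∫⁻ u in Ioc (0:ℝ) T, (‖f u‖₊ : ENNReal) ∂volume := by
  have hT0 : (0:ℝ) < T := lt_of_lt_of_le hs.1 hs.2
  calc Jfun T α β f s
      ≤ ∫⁻ u in Ioc s T, (‖f u‖₊ : ENNReal) * ENNReal.ofReal (T ^ α * T ^ (β - 1)) ∂volume := by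
        apply lintegral_mono_ae
        filter_upwards [ae_restrict_mem measurableSet_Ioc] with u hu
        apply mul_le_mul_right
        apply ENNReal.ofReal_le_ofReal
        have hu0 : (0:ℝ) < u := hs.1.trans hu.1
        apply mul_le_mul
        · exact Real.rpow_le_rpow hu0.le hu.2 hα.le
        · exact Real.rpow_le_rpow (by linarith [hu.1]) (by linarith [hu.2, hs.1]) (by linarith)
        · exact Real.rpow_nonneg (by linarith [hu.1]) _
        · exact Real.rpow_nonneg hT0.le _
    _ = ENNReal.ofReal (T ^ α * T ^ (β - 1)) * ∫⁻ u in Ioc s T, (‖f u‖₊ : ENNReal) ∂volume := by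
        rw [lintegral_mul_const' _ _ ENNReal.ofReal_ne_top, mul_comm]
    _ ≤ ENNReal.ofReal (T ^ α * T ^ (β - 1)) * ∫⁻ u in Ioc (0:ℝ) T, (‖f u‖₊ : ENNReal) ∂volume :=
        mul_le_mul_right (lintegral_mono_set (Ioc_subset_Ioc_left hs.1.le)) _

lemma l1_bound {T : ℝ} (f : Lp ℝ 2 (volume.restrict (Ioc (0:ℝ) T))) :
    (∫⁻ u in Ioc (0:ℝ) T, (‖(f : ℝ → ℝ) u‖₊ : ENNReal) ∂volume)
      ≤ ENNReal.ofReal T ^ (1/2:ℝ) * ENNReal.ofReal ‖f‖ := by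
  have hconj : (2:ℝ).HolderConjugate 2 := Real.HolderConjugate.two_two
  have hCS := ENNReal.lintegral_mul_le_Lp_mul_Lq (volume.restrict (Ioc (0:ℝ) T)) hconj
    (f := fun u => (‖(f : ℝ → ℝ) u‖₊ : ENNReal)) (g := fun _ => (1:ENNReal))
    (by exact (Lp.aestronglyMeasurable f).enorm) aemeasurable_const
  simp only [mul_one, Pi.mul_apply] at hCS
  have h2 : (∫⁻ _ in Ioc (0:ℝ) T, ((1:ENNReal)) ^ (2:ℝ) ∂volume) ^ (1/(2:ℝ))
      = ENNReal.ofReal T ^ (1/2:ℝ) := by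
    simp only [ENNReal.one_rpow, lintegral_one, Measure.restrict_apply_univ, Real.volume_Ioc,
      sub_zero]
  have h1 : (∫⁻ u in Ioc (0:ℝ) T, ((‖(f : ℝ → ℝ) u‖₊ : ENNReal)) ^ (2:ℝ) ∂volume) ^ (1/(2:ℝ))
      = ENNReal.ofReal ‖f‖ := by
    have h3 := MeasureTheory.eLpNorm_eq_lintegral_rpow_enorm_toReal (f := ((f : ℝ → ℝ)))
      (μ := volume.restrict (Ioc (0:ℝ) T)) (p := (2:ENNReal)) (by norm_num) (by norm_num)
    simp only [ENNReal.toReal_ofNat, enorm_eq_nnnorm] at h3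
    rw [← h3, Lp.norm_def, ENNReal.ofReal_toReal (Lp.eLpNorm_ne_top f)]
  rw [h1, h2] at hCS
  exact hCS.trans (le_of_eq (mul_comm _ _))

lemma norm_le_of_ae_bound {T : ℝ} {α : ℝ}
    {h : Lp ℝ 2 (volume.restrict (Ioc (0:ℝ) T))} {D : ENNReal} (hD : D ≠ ⊤)
    (hE : eLpNorm (fun s : ℝ => s ^ (-α)) 2 (volume.restrict (Ioc (0:ℝ) T)) ≠ ⊤)
    (hb : ∀ᵐ s ∂(volume.restrict (Ioc (0:ℝ) T)),
      (‖(h : ℝ → ℝ) s‖₊ : ENNReal) ≤ D * ENNReal.ofReal (s ^ (-α))) :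
    ‖h‖ ≤ D.toReal *
      (eLpNorm (fun s : ℝ => s ^ (-α)) 2 (volume.restrict (Ioc (0:ℝ) T))).toReal := by
  have hD0 : (0:ℝ) ≤ D.toReal := ENNReal.toReal_nonneg
  have hmono : ∀ᵐ s ∂(volume.restrict (Ioc (0:ℝ) T)),
      ‖(h : ℝ → ℝ) s‖ ≤ ‖D.toReal * s ^ (-α)‖ := by
    filter_upwards [hb, ae_restrict_mem measurableSet_Ioc] with s hbs hs
    have hs0 : (0:ℝ) < s := hs.1
    have hφ0 : (0:ℝ) ≤ s ^ (-α) := Real.rpow_nonneg hs0.le _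
    have h1 : (‖(h : ℝ → ℝ) s‖₊ : ENNReal) ≤ ENNReal.ofReal (D.toReal * s ^ (-α)) := by
      rw [ENNReal.ofReal_mul hD0, ENNReal.ofReal_toReal hD]
      exact hbs
    have h2 := ENNReal.toReal_mono ENNReal.ofReal_ne_top h1
    rw [ENNReal.coe_toReal, coe_nnnorm, ENNReal.toReal_ofReal (by positivity)] at h2
    exact h2.trans (le_abs_self _)
  have hsm : eLpNorm ((h : ℝ → ℝ)) 2 (volume.restrict (Ioc (0:ℝ) T))
      ≤ eLpNorm (D.toReal • (fun s : ℝ => s ^ (-α))) 2 (volume.restrict (Ioc (0:ℝ) T)) :=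
    eLpNorm_mono_ae hmono
  rw [eLpNorm_const_smul] at hsm
  rw [Lp.norm_def]
  calc (eLpNorm ((h : ℝ → ℝ)) 2 (volume.restrict (Ioc (0:ℝ) T))).toReal
      ≤ ((‖D.toReal‖₊ : ENNReal) *
          eLpNorm (fun s : ℝ => s ^ (-α)) 2 (volume.restrict (Ioc (0:ℝ) T))).toReal :=
        ENNReal.toReal_mono (ENNReal.mul_ne_top ENNReal.coe_ne_top hE) hsm
    _ = D.toReal * (eLpNorm (fun s : ℝ => s ^ (-α)) 2 (volume.restrict (Ioc (0:ℝ) T))).toReal := by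
        rw [ENNReal.toReal_mul, ENNReal.coe_toReal, coe_nnnorm, Real.norm_eq_abs, abs_of_nonneg hD0]

lemma Eα_ne_top {T α : ℝ} (hT : 0 < T) (hα : 0 < α) (hα2 : α < 1/2) :
    eLpNorm (fun s : ℝ => s ^ (-α)) 2 (volume.restrict (Ioc (0:ℝ) T)) ≠ ⊤ := by
  rw [MeasureTheory.eLpNorm_eq_lintegral_rpow_enorm_toReal (by norm_num) (by norm_num)]
  simp only [ENNReal.toReal_ofNat]
  apply ENNReal.rpow_ne_top_of_nonneg (by norm_num)
  have hcong : ∫⁻ s in Ioc (0:ℝ) T, ‖s ^ (-α)‖ₑ ^ (2:ℝ)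
      = ∫⁻ s in Ioc (0:ℝ) T, ENNReal.ofReal (s ^ (-(2*α))) := by
    apply setLIntegral_congr_fun measurableSet_Ioc
    intro s hs
    have hs0 : (0:ℝ) < s := hs.1
    have hφ0 : (0:ℝ) ≤ s ^ (-α) := Real.rpow_nonneg hs0.le _
    beta_reduce
    rw [Real.enorm_eq_ofReal hφ0, ENNReal.ofReal_rpow_of_nonneg hφ0 (by norm_num : (0:ℝ) ≤ 2),
      ← Real.rpow_mul hs0.le]
    congr 1
    ring
  rw [hcong]
  have hint : IntegrableOn (fun s : ℝ => s ^ (-(2*α))) (Ioc (0:ℝ) T) volume := by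
    rw [← intervalIntegrable_iff_integrableOn_Ioc_of_le hT.le]
    exact intervalIntegral.intervalIntegrable_rpow' (by linarith)
  apply ne_top_of_le_ne_top hint.2.ne
  exact lintegral_mono fun s => Real.ofReal_le_enorm _

lemma Bconst_tendsto {α : ℝ} (hα : 0 < α) :
    Tendsto (fun k : ℕ => Bconst α ((k:ℝ) * α)) atTop (𝓝 0) := by
  set k₀ : ℕ := ⌈1/α⌉₊ + 1 with hk₀
  rw [← Filter.tendsto_add_atTop_iff_nat k₀]
  have hge : ∀ n : ℕ, (1:ℝ) ≤ ((n + k₀ : ℕ):ℝ) * α := by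
    intro n
    have h1 : (1:ℝ)/α ≤ (k₀:ℝ) := by
      calc (1:ℝ)/α ≤ (⌈1/α⌉₊:ℝ) := Nat.le_ceil _
        _ ≤ (k₀:ℝ) := by rw [hk₀]; push_cast; linarith
    have h2 : (k₀:ℝ) ≤ ((n + k₀:ℕ):ℝ) := by push_cast; linarith [Nat.cast_nonneg (α := ℝ) n]
    calc (1:ℝ) = (1/α) * α := by field_simp
      _ ≤ ((n+k₀:ℕ):ℝ) * α := by apply mul_le_mul_of_nonneg_right (h1.trans h2) hα.le
  have h0 : (0:ENNReal) = ∫⁻ x in Ioc (0:ℝ) 1, (0:ENNReal) := by simp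
  rw [h0]
  apply tendsto_lintegral_of_dominated_convergence (fun x => ENNReal.ofReal (x ^ (α-1)))
  · intro n; fun_prop
  · intro n
    filter_upwards [ae_restrict_mem measurableSet_Ioc] with x hx
    apply ENNReal.ofReal_le_ofReal
    apply mul_le_of_le_one_right (Real.rpow_nonneg hx.1.le _)
    exact Real.rpow_le_one (by linarith [hx.2]) (by linarith [hx.1]) (by linarith [hge n])
  · exact (Iα_lt_top hα).ne
  · have hae : ∀ᵐ x ∂(volume.restrict (Ioc (0:ℝ) 1)), x ∈ Ioo (0:ℝ) 1 := by
      rw [Measure.restrict_congr_set Ioo_ae_eq_Ioc.symm]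
      exact ae_restrict_mem measurableSet_Ioo
    filter_upwards [hae] with x hx
    have h1x : 0 < 1 - x := by linarith [hx.2]
    have h1x' : 1 - x < 1 := by linarith [hx.1]
    have hbase : Tendsto (fun t : ℝ => (1 - x) ^ t) atTop (𝓝 0) :=
      tendsto_rpow_atTop_of_base_lt_one _ (by linarith) h1x'
    have hexp : Tendsto (fun n : ℕ => ((n + k₀ : ℕ):ℝ) * α - 1) atTop atTop := by
      apply tendsto_atTop_add_const_right
      apply Tendsto.atTop_mul_const hα
      exact tendsto_natCast_atTop_atTop.comp (tendsto_add_atTop_nat k₀)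
    have := (hbase.comp hexp).const_mul (x ^ (α-1))
    rw [mul_zero] at this
    have := (ENNReal.tendsto_ofReal this)
    rw [ENNReal.ofReal_zero] at this
    exact this

set_option maxHeartbeats 2000000 in
set_option synthInstance.maxHeartbeats 1000000 in
theorem neumann_series_inverse (H T a b : ℝ) (hH : H ∈ Set.Ioo (1/2 : ℝ) 1) (hT : 0 < T)
    (ha : a ≠ 0)
    (Kop : Lp ℝ 2 (volume.restrict (Set.Ioc (0:ℝ) T)) →L[ℝ]
            Lp ℝ 2 (volume.restrict (Set.Ioc (0:ℝ) T)))
    (hKop : ∀ f : Lp ℝ 2 (volume.restrict (Set.Ioc (0:ℝ) T)),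
      (Kop f : ℝ → ℝ) =ᵐ[volume.restrict (Set.Ioc (0:ℝ) T)]
        fun s => cH H * s ^ (-(H - 1/2)) *
          ∫ u in s..T, (f : ℝ → ℝ) u * u ^ (H - 1/2) * (u - s) ^ (H - 3/2)) :
    Summable (fun k : ℕ => ‖((1/a) * (-b/a)^k) • Kop ^ k‖) ∧
    (∑' k : ℕ, ((1/a) * (-b/a)^k) • Kop ^ k).comp
        (a • ContinuousLinearMap.id ℝ (Lp ℝ 2 (volume.restrict (Set.Ioc (0:ℝ) T))) + b • Kop)
      = ContinuousLinearMap.id ℝ (Lp ℝ 2 (volume.restrict (Set.Ioc (0:ℝ) T))) ∧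
    (a • ContinuousLinearMap.id ℝ (Lp ℝ 2 (volume.restrict (Set.Ioc (0:ℝ) T))) + b • Kop).comp
        (∑' k : ℕ, ((1/a) * (-b/a)^k) • Kop ^ k)
      = ContinuousLinearMap.id ℝ (Lp ℝ 2 (volume.restrict (Set.Ioc (0:ℝ) T))) ∧
    Function.Bijective
      ⇑(a • ContinuousLinearMap.id ℝ (Lp ℝ 2 (volume.restrict (Set.Ioc (0:ℝ) T))) + b • Kop) := by
  set α : ℝ := H - 1/2 with hαdef
  have hα : 0 < α := by rw [hαdef]; linarith [hH.1]
  have hα2 : α < 1/2 := by rw [hαdef]; linarith [hH.2]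
  have hc : 0 ≤ cH H := mul_nonneg (Real.sqrt_nonneg _) (by linarith [hH.1])
  -- base formula with a measurable representative
  have hbase : ∀ (g : Lp ℝ 2 (volume.restrict (Set.Ioc (0:ℝ) T))) (gm : ℝ → ℝ), Measurable gm → (⇑g =ᵐ[volume.restrict (Set.Ioc (0:ℝ) T)] gm) →
      ∀ᵐ s ∂volume.restrict (Set.Ioc (0:ℝ) T), (Kop g : ℝ → ℝ) s
        = cH H * s ^ (-α) * ∫ u in s..T, gm u * u ^ α * (u - s) ^ (α - 1) := by
    intro g gm hgm hge
    filter_upwards [hKop g, ae_restrict_mem measurableSet_Ioc] with s hK hs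
    rw [hK]
    have heq : ∫ u in s..T, (g : ℝ → ℝ) u * u ^ (H - 1/2) * (u - s) ^ (H - 3/2)
        = ∫ u in s..T, gm u * u ^ α * (u - s) ^ (α - 1) := by
      rw [intervalIntegral.integral_of_le hs.2, intervalIntegral.integral_of_le hs.2]
      apply integral_congr_ae
      have hg' : ⇑g =ᵐ[volume.restrict (Ioc s T)] gm :=
        ae_restrict_of_ae_restrict_of_subset (Ioc_subset_Ioc_left hs.1.le) hge
      filter_upwards [hg'] with u hu
      have e : H - 3/2 = α - 1 := by rw [hαdef]; ring
      rw [hu, e]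
    rw [heq, hαdef]
  -- the constants
  set Cc : ℕ → ENNReal := fun n =>
    ENNReal.ofReal (cH H) ^ (n+1) * ∏ i ∈ Finset.range n, Bconst α (((i:ℝ)+1) * α) with hCc
  have hCrec : ∀ n, Cc (n+1) = ENNReal.ofReal (cH H) * Bconst α (((n:ℝ)+1) * α) * Cc n := by
    intro n
    rw [hCc]
    simp only [Finset.prod_range_succ, pow_succ]
    ring
  have hCfin : ∀ n, Cc n ≠ ⊤ := by
    intro n
    rw [hCc]
    apply ENNReal.mul_ne_top (ENNReal.pow_ne_top ENNReal.ofReal_ne_top)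
    apply ENNReal.prod_ne_top
    intro i _
    exact Bconst_ne_top' hα (by positivity)
  -- the main induction
  have hmain : ∀ n : ℕ, ∀ (g : Lp ℝ 2 (volume.restrict (Set.Ioc (0:ℝ) T))) (gm : ℝ → ℝ), Measurable gm → (⇑g =ᵐ[volume.restrict (Set.Ioc (0:ℝ) T)] gm) →
      ∀ᵐ s ∂volume.restrict (Set.Ioc (0:ℝ) T), (‖((Kop ^ (n+1)) g : ℝ → ℝ) s‖₊ : ENNReal)
        ≤ Cc n * ENNReal.ofReal (s ^ (-α)) * Jfun T α (((n:ℝ)+1) * α) gm s := by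
    intro n
    induction n with
    | zero =>
      intro g gm hgm hge
      have e1 : Kop ^ 1 = Kop := pow_one Kop
      rw [e1]
      have h1 := base_bound hc hgm (hbase g gm hgm hge)
      have e2 : (((0:ℕ):ℝ)+1) * α = α := by norm_num
      have e3 : Cc 0 = ENNReal.ofReal (cH H) := by rw [hCc]; simp
      rw [e2, e3]
      exact h1
    | succ n ih =>
      intro g gm hgm hge
      set h₁ : Lp ℝ 2 (volume.restrict (Set.Ioc (0:ℝ) T)) := (Kop ^ (n+1)) g with hh₁
      set h₁m : ℝ → ℝ := ((Lp.aestronglyMeasurable h₁).mk _) with hh₁m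
      have hm_meas : Measurable h₁m := (Lp.aestronglyMeasurable h₁).stronglyMeasurable_mk.measurable
      have hm_eq : ⇑h₁ =ᵐ[volume.restrict (Set.Ioc (0:ℝ) T)] h₁m := (Lp.aestronglyMeasurable h₁).ae_eq_mk
      have e1 : Kop ^ (n+1+1) = Kop * Kop ^ (n+1) := pow_succ' Kop (n+1)
      have e2 : (Kop ^ (n+1+1)) g = Kop h₁ := by rw [e1]; rfl
      rw [e2]
      -- the one-step bound
      have hstep := base_bound hc hm_meas (hbase h₁ h₁m hm_meas hm_eq)
      -- transfer the inductive bound to h₁m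
      have ihm : ∀ᵐ u ∂volume.restrict (Set.Ioc (0:ℝ) T), (‖h₁m u‖₊ : ENNReal)
          ≤ Cc n * ENNReal.ofReal (u ^ (-α)) * Jfun T α (((n:ℝ)+1) * α) gm u := by
        filter_upwards [ih g gm hgm hge, hm_eq] with u hu hue
        rw [← hue]
        exact hu
      filter_upwards [hstep, ae_restrict_mem measurableSet_Ioc] with s hss hs
      have hJ := J_le_step hα (by positivity : 0 < ((n:ℝ)+1) * α) (hCfin n) hgm ihm hs.1
      have e3 : α + ((n:ℝ)+1) * α = (((n+1:ℕ):ℝ)+1) * α := by push_cast; ring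
      rw [e3] at hJ
      calc (‖(Kop h₁ : ℝ → ℝ) s‖₊ : ENNReal)
          ≤ ENNReal.ofReal (cH H) * ENNReal.ofReal (s ^ (-α)) * Jfun T α α h₁m s := hss
        _ ≤ ENNReal.ofReal (cH H) * ENNReal.ofReal (s ^ (-α)) *
              (Cc n * Bconst α (((n:ℝ)+1) * α) * Jfun T α ((((n+1:ℕ):ℝ)+1) * α) gm s) :=
            mul_le_mul_right hJ _
        _ = Cc (n+1) * ENNReal.ofReal (s ^ (-α)) * Jfun T α ((((n+1:ℕ):ℝ)+1) * α) gm s := by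
            rw [hCrec n]; push_cast; ring
  -- operator norm bounds
  have hEne : eLpNorm (fun s : ℝ => s ^ (-α)) 2 (volume.restrict (Set.Ioc (0:ℝ) T)) ≠ ⊤ :=
    Eα_ne_top hT hα hα2
  set Eα : ℝ := (eLpNorm (fun s : ℝ => s ^ (-α)) 2 (volume.restrict (Set.Ioc (0:ℝ) T))).toReal
    with hEαdef
  set AA : ℕ → ENNReal := fun n =>
    Cc n * ENNReal.ofReal (T ^ α * T ^ ((((n:ℝ)+1) * α) - 1)) * ENNReal.ofReal T ^ (1/2:ℝ)
    with hAA
  have hAfin : ∀ n, AA n ≠ ⊤ := by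
    intro n
    exact ENNReal.mul_ne_top (ENNReal.mul_ne_top (hCfin n) ENNReal.ofReal_ne_top)
      (ENNReal.rpow_ne_top_of_nonneg (by norm_num) ENNReal.ofReal_ne_top)
  set Nn : ℕ → ℝ := fun n => (AA n).toReal * Eα with hNn
  have hNn0 : ∀ n, 0 ≤ Nn n := fun n => mul_nonneg ENNReal.toReal_nonneg ENNReal.toReal_nonneg
  have hopnorm : ∀ n : ℕ, 1 ≤ ((n:ℝ)+1) * α → ‖Kop ^ (n+1)‖ ≤ Nn n := by
    intro n hβ1
    apply ContinuousLinearMap.opNorm_le_bound _ (hNn0 n)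
    intro g
    set gm : ℝ → ℝ := ((Lp.aestronglyMeasurable g).mk _) with hgm
    have hm_meas : Measurable gm := (Lp.aestronglyMeasurable g).stronglyMeasurable_mk.measurable
    have hm_eq : ⇑g =ᵐ[volume.restrict (Set.Ioc (0:ℝ) T)] gm := (Lp.aestronglyMeasurable g).ae_eq_mk
    have hb := hmain n g gm hm_meas hm_eq
    have hl1 : (∫⁻ u in Ioc (0:ℝ) T, (‖gm u‖₊ : ENNReal) ∂volume)
        ≤ ENNReal.ofReal T ^ (1/2:ℝ) * ENNReal.ofReal ‖g‖ := by
      have he : (∫⁻ u in Ioc (0:ℝ) T, (‖gm u‖₊ : ENNReal) ∂volume)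
          = ∫⁻ u in Ioc (0:ℝ) T, (‖(g : ℝ → ℝ) u‖₊ : ENNReal) ∂volume := by
        apply lintegral_congr_ae
        filter_upwards [hm_eq] with u hu
        rw [hu]
      rw [he]
      exact l1_bound g
    have hD : ∀ᵐ s ∂(volume.restrict (Set.Ioc (0:ℝ) T)),
        (‖(((Kop ^ (n+1)) g : Lp ℝ 2 (volume.restrict (Set.Ioc (0:ℝ) T))) : ℝ → ℝ) s‖₊ : ENNReal)
          ≤ (AA n * ENNReal.ofReal ‖g‖) * ENNReal.ofReal (s ^ (-α)) := by
      filter_upwards [hb, ae_restrict_mem measurableSet_Ioc] with s hbs hs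
      calc (‖(((Kop ^ (n+1)) g : Lp ℝ 2 (volume.restrict (Set.Ioc (0:ℝ) T))) : ℝ → ℝ) s‖₊ : ENNReal)
          ≤ Cc n * ENNReal.ofReal (s ^ (-α)) * Jfun T α (((n:ℝ)+1) * α) gm s := hbs
        _ ≤ Cc n * ENNReal.ofReal (s ^ (-α)) *
              (ENNReal.ofReal (T ^ α * T ^ ((((n:ℝ)+1) * α) - 1)) *
                (ENNReal.ofReal T ^ (1/2:ℝ) * ENNReal.ofReal ‖g‖)) := by
            apply mul_le_mul_right
            exact (J_le_const hα hβ1 hs).trans (mul_le_mul_right hl1 _)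
        _ = (AA n * ENNReal.ofReal ‖g‖) * ENNReal.ofReal (s ^ (-α)) := by
            rw [hAA]; ring
    have hfin : AA n * ENNReal.ofReal ‖g‖ ≠ ⊤ :=
      ENNReal.mul_ne_top (hAfin n) ENNReal.ofReal_ne_top
    have hnb := norm_le_of_ae_bound hfin hEne hD
    rw [ENNReal.toReal_mul, ENNReal.toReal_ofReal (norm_nonneg g)] at hnb
    calc ‖(Kop ^ (n+1)) g‖ ≤ (AA n).toReal * ‖g‖ * Eα := hnb
      _ = Nn n * ‖g‖ := by rw [hNn]; ring
  -- ratio recursion for Nn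
  set w : ℕ → ℝ := fun n =>
    (ENNReal.ofReal (cH H) * Bconst α (((n:ℝ)+1) * α) * ENNReal.ofReal (T ^ α)).toReal with hw
  have hNrec : ∀ n, Nn (n+1) = Nn n * w n := by
    intro n
    have hA1 : AA (n+1) = AA n *
        (ENNReal.ofReal (cH H) * Bconst α (((n:ℝ)+1) * α) * ENNReal.ofReal (T ^ α)) := by
      rw [hAA]
      simp only
      rw [hCrec n]
      have hT1 : T ^ ((((n+1:ℕ):ℝ)+1) * α - 1) = T ^ ((((n:ℝ)+1) * α) - 1) * T ^ α := by
        rw [← Real.rpow_add hT]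
        congr 1
        push_cast
        ring
      rw [ENNReal.ofReal_mul (Real.rpow_nonneg hT.le _), ENNReal.ofReal_mul (Real.rpow_nonneg hT.le _),
        hT1, ENNReal.ofReal_mul (Real.rpow_nonneg hT.le _)]
      push_cast
      ring
    rw [hNn]
    simp only
    rw [hA1, ENNReal.toReal_mul, hw]
    ring
  -- summability of the comparison series
  set q : ℝ := |(-b/a)| with hq
  have hq0 : 0 ≤ q := abs_nonneg _
  set uu : ℕ → ℝ := fun n => |1/a| * q^(n+1) * Nn n with huu
  have huu0 : ∀ n, 0 ≤ uu n := fun n =>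
    mul_nonneg (mul_nonneg (abs_nonneg _) (pow_nonneg hq0 _)) (hNn0 n)
  have hwt : Tendsto (fun n : ℕ => q * w n) atTop (𝓝 0) := by
    have hB0 : Tendsto (fun k : ℕ => (Bconst α ((k:ℝ) * α)).toReal) atTop (𝓝 0) := by
      have := (ENNReal.tendsto_toReal (a := 0) (by simp)).comp (Bconst_tendsto hα)
      simpa [Function.comp_def] using this
    have hB1 : Tendsto (fun n : ℕ => (Bconst α (((n:ℝ)+1) * α)).toReal) atTop (𝓝 0) := by
      have h2 : Tendsto (fun n : ℕ => (Bconst α (((n+1:ℕ):ℝ) * α)).toReal) atTop (𝓝 0) :=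
        (Filter.tendsto_add_atTop_iff_nat 1).mpr hB0
      convert h2 using 2 with n
      push_cast
      ring
    have h3 : Tendsto (fun n : ℕ =>
        (q * ((ENNReal.ofReal (cH H)).toReal * (ENNReal.ofReal (T ^ α)).toReal)) *
          (Bconst α (((n:ℝ)+1) * α)).toReal) atTop (𝓝 0) := by
      have := hB1.const_mul (q * ((ENNReal.ofReal (cH H)).toReal * (ENNReal.ofReal (T ^ α)).toReal))
      simpa using this
    convert h3 using 2 with n
    rw [hw]
    simp only
    rw [ENNReal.toReal_mul, ENNReal.toReal_mul]
    ring
  have hsum_u : Summable uu := by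
    apply summable_of_ratio_norm_eventually_le (r := 1/2) (by norm_num)
    have hev := hwt.eventually_le_const (show (0:ℝ) < 1/2 by norm_num)
    filter_upwards [hev] with n hn
    rw [Real.norm_eq_abs, Real.norm_eq_abs, abs_of_nonneg (huu0 (n+1)), abs_of_nonneg (huu0 n)]
    have he : uu (n+1) = uu n * (q * w n) := by
      rw [huu]
      simp only
      rw [hNrec n]
      ring
    rw [he]
    have hqwn : 0 ≤ q * w n := by
      apply mul_nonneg hq0
      rw [hw]
      exact ENNReal.toReal_nonneg
    calc uu n * (q * w n) ≤ uu n * (1/2) := mul_le_mul_of_nonneg_left hn (huu0 n)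
      _ = 1/2 * uu n := by ring
  -- summability of the operator series
  have key1 : Summable (fun k : ℕ => ‖((1/a) * (-b/a)^k) • Kop ^ k‖) := by
    set n₀ : ℕ := ⌈1/α⌉₊ with hn₀
    have hcond : ∀ n : ℕ, n₀ ≤ n → 1 ≤ ((n:ℝ)+1) * α := by
      intro n hn
      have h1 : (1:ℝ)/α ≤ (n₀:ℝ) := Nat.le_ceil _
      have h2 : (n₀:ℝ) ≤ (n:ℝ) := by exact_mod_cast hn
      calc (1:ℝ) = (1/α) * α := by field_simp
        _ ≤ ((n:ℝ)+1) * α := by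
            apply mul_le_mul_of_nonneg_right _ hα.le
            linarith
    apply (summable_nat_add_iff (n₀+1)).mp
    apply Summable.of_nonneg_of_le (fun n => norm_nonneg _) _
      ((summable_nat_add_iff n₀).mpr hsum_u)
    intro n
    have hek : n + (n₀+1) = (n + n₀) + 1 := by omega
    rw [hek]
    have hns := norm_smul (α := ℝ) ((1/a) * (-b/a)^((n+n₀)+1)) (Kop ^ ((n+n₀)+1))
    rw [hns]
    have habs : ‖(1/a) * (-b/a)^((n+n₀)+1)‖ = |1/a| * q^((n+n₀)+1) := by
      rw [Real.norm_eq_abs, abs_mul, abs_pow, hq]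
    rw [habs]
    calc |1/a| * q^((n+n₀)+1) * ‖Kop ^ ((n+n₀)+1)‖
        ≤ |1/a| * q^((n+n₀)+1) * Nn (n+n₀) := by
          apply mul_le_mul_of_nonneg_left _ (by positivity)
          exact hopnorm (n+n₀) (hcond (n+n₀) (by omega))
      _ = uu (n+n₀) := by rw [huu]
  -- the algebraic part
  have hsumS : Summable (fun k : ℕ => ((1/a) * (-b/a)^k) • Kop ^ k) := Summable.of_norm key1
  set SS : Lp ℝ 2 (volume.restrict (Set.Ioc (0:ℝ) T)) →L[ℝ]
      Lp ℝ 2 (volume.restrict (Set.Ioc (0:ℝ) T)) := ∑' k : ℕ, ((1/a) * (-b/a)^k) • Kop ^ k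
    with hSS
  set AO : Lp ℝ 2 (volume.restrict (Set.Ioc (0:ℝ) T)) →L[ℝ]
      Lp ℝ 2 (volume.restrict (Set.Ioc (0:ℝ) T)) :=
    a • ContinuousLinearMap.id ℝ (Lp ℝ 2 (volume.restrict (Set.Ioc (0:ℝ) T))) + b • Kop with hAO
  have hgsum : Summable (fun k : ℕ => (-b/a)^k • Kop ^ k) := by
    have he : (fun k : ℕ => (-b/a)^k • Kop ^ k)
        = fun k : ℕ => a • (((1/a) * (-b/a)^k) • Kop ^ k) := by
      funext k
      rw [smul_smul]
      congr 1
      field_simp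
    rw [he]
    exact hsumS.const_smul a
  have hgsum1 : Summable (fun k : ℕ => (-b/a)^(k+1) • Kop ^ (k+1)) :=
    (summable_nat_add_iff 1).mpr hgsum
  have htel : ∑' k : ℕ, ((-b/a)^k • Kop ^ k - (-b/a)^(k+1) • Kop ^ (k+1)) = 1 := by
    rw [hgsum.tsum_sub hgsum1, hgsum.tsum_eq_zero_add, add_sub_cancel_right]
    simp
  have hcoefa : ∀ k : ℕ, ((1/a) * (-b/a)^k) * a = (-b/a)^k := by
    intro k; field_simp
  have hcoefb : ∀ k : ℕ, ((1/a) * (-b/a)^k) * b = -((-b/a)^(k+1)) := by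
    intro k
    rw [pow_succ]
    ring
  have hid1 : ContinuousLinearMap.id ℝ (Lp ℝ 2 (volume.restrict (Set.Ioc (0:ℝ) T)))
      = (1 : Lp ℝ 2 (volume.restrict (Set.Ioc (0:ℝ) T)) →L[ℝ]
          Lp ℝ 2 (volume.restrict (Set.Ioc (0:ℝ) T))) := rfl
  have hSA : SS * AO = 1 := by
    rw [hSS, ← Summable.tsum_mul_right AO hsumS]
    rw [tsum_congr (f := fun k => (((1/a) * (-b/a)^k) • Kop ^ k) * AO)
      (g := fun k => ((-b/a)^k • Kop ^ k - (-b/a)^(k+1) • Kop ^ (k+1))) ?_]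
    · exact htel
    · intro k
      beta_reduce
      rw [hAO, hid1, mul_add, smul_mul_assoc, smul_mul_assoc, mul_smul_comm, mul_smul_comm,
        mul_one, ← pow_succ, smul_smul, smul_smul, hcoefa k, hcoefb k, neg_smul,
        ← sub_eq_add_neg]
  have hAS : AO * SS = 1 := by
    rw [hSS, ← Summable.tsum_mul_left AO hsumS]
    rw [tsum_congr (f := fun k => AO * (((1/a) * (-b/a)^k) • Kop ^ k))
      (g := fun k => ((-b/a)^k • Kop ^ k - (-b/a)^(k+1) • Kop ^ (k+1))) ?_]
    · exact htel
    · intro k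
      beta_reduce
      rw [hAO, hid1, add_mul, smul_mul_assoc, smul_mul_assoc, mul_smul_comm, mul_smul_comm,
        one_mul, ← pow_succ', smul_smul, smul_smul, mul_comm a, mul_comm b, hcoefa k, hcoefb k,
        neg_smul, ← sub_eq_add_neg]
  have hc2 : SS.comp AO = ContinuousLinearMap.id ℝ (Lp ℝ 2 (volume.restrict (Set.Ioc (0:ℝ) T))) :=
    hSA
  have hc3 : AO.comp SS = ContinuousLinearMap.id ℝ (Lp ℝ 2 (volume.restrict (Set.Ioc (0:ℝ) T))) :=
    hAS
  have happ2 : ∀ z, SS (AO z) = z := by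
    intro z
    have h := congrArg (fun (M : Lp ℝ 2 (volume.restrict (Set.Ioc (0:ℝ) T)) →L[ℝ]
      Lp ℝ 2 (volume.restrict (Set.Ioc (0:ℝ) T))) => M z) hc2
    simpa using h
  have happ3 : ∀ z, AO (SS z) = z := by
    intro z
    have h := congrArg (fun (M : Lp ℝ 2 (volume.restrict (Set.Ioc (0:ℝ) T)) →L[ℝ]
      Lp ℝ 2 (volume.restrict (Set.Ioc (0:ℝ) T))) => M z) hc3
    simpa using h
  refine ⟨key1, hc2, hc3, ?_, ?_⟩
  · intro x y hxy
    rw [← happ2 x, ← happ2 y, hxy]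
  · intro y
    exact ⟨SS y, happ3 y⟩
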